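/- The double series Σ_{r=1}^∞ Σ_{s=1}^∞ [ 1/(2r + 2s − 2)⁶ − 1/(2r + 2s − 1)⁶ ] converges (each bracketed term being positive) and its value lies strictly between 0.0146 and 0.0147. -/

import Mathlib

open Filter Finset

private lemma telescope_hasSum (u : ℕ → ℝ) (h0 : Tendsto u atTop (nhds 0))
    (hnn : ∀ n, 0 ≤ u n - u (n + 1)) :
    HasSum (fun n => u n - u (n + 1)) (u 0) := by
  rw [hasSum_iff_tendsto_nat_of_nonneg hnn]
  have key : ∀ n, ∑ i ∈ Finset.range n, (u i - u (i + 1)) = u 0 - u n := by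
    intro n; exact Finset.sum_range_sub' u n
  simp only [key]
  simpa using tendsto_const_nhds.sub h0

private lemma Psummable : Summable (fun n : ℕ => 1 / ((n : ℝ) + 1) ^ 2) := by
  have := (summable_nat_add_iff 1).mpr (Real.summable_one_div_nat_pow.mpr (by norm_num : 1 < 2))
  simpa [add_comm] using this

private lemma hasSum_inner (m : ℝ) (hm : 1 ≤ m) :
    HasSum (fun b : ℕ => 1 / (((b : ℝ) + m) * ((b : ℝ) + m + 1) * ((b : ℝ) + m + 2) * ((b : ℝ) + m + 3)))
      (1 / (3 * m * (m + 1) * (m + 2))) := by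
  have hm0 : (0:ℝ) < m := lt_of_lt_of_le one_pos hm
  set u : ℕ → ℝ := fun b => 1 / (3 * ((b : ℝ) + m) * ((b : ℝ) + m + 1) * ((b : ℝ) + m + 2)) with hu
  have hpos : ∀ b : ℕ, (0:ℝ) < ((b : ℝ) + m) := fun b => by positivity
  have hdiff : ∀ b : ℕ, u b - u (b + 1)
      = 1 / (((b : ℝ) + m) * ((b : ℝ) + m + 1) * ((b : ℝ) + m + 2) * ((b : ℝ) + m + 3)) := by
    intro b
    have h1 := hpos b
    simp only [hu, Nat.cast_add, Nat.cast_one]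
    field_simp
    ring
  have h0 : Tendsto u atTop (nhds 0) := by
    apply squeeze_zero (g := fun b : ℕ => 1 / ((b : ℝ) + 1))
    · intro b; have := hpos b; positivity
    · intro b
      have hb : (0:ℝ) ≤ (b : ℝ) := Nat.cast_nonneg b
      apply one_div_le_one_div_of_le (by positivity)
      have ht : (b : ℝ) + 1 ≤ (b : ℝ) + m := by linarith
      nlinarith [mul_pos (hpos b) (mul_pos (by positivity : (0:ℝ) < (b:ℝ)+m+1) (by positivity : (0:ℝ) < (b:ℝ)+m+2)), mul_pos (hpos b) (hpos b)]
    · exact tendsto_one_div_add_atTop_nhds_zero_nat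
  have hnn : ∀ b : ℕ, 0 ≤ u b - u (b + 1) := by
    intro b; rw [hdiff b]; have := hpos b; positivity
  have := telescope_hasSum u h0 hnn
  rw [show u 0 = 1 / (3 * m * (m + 1) * (m + 2)) by simp [hu]] at this
  simpa only [hdiff] using this

private lemma hasSum_outer :
    HasSum (fun a : ℕ => 1 / (3 * ((a : ℝ) + 10) * ((a : ℝ) + 11) * ((a : ℝ) + 12)))
      (1 / 660) := by
  set u : ℕ → ℝ := fun a => 1 / (6 * ((a : ℝ) + 10) * ((a : ℝ) + 11)) with hu
  have hdiff : ∀ a : ℕ, u a - u (a + 1)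
      = 1 / (3 * ((a : ℝ) + 10) * ((a : ℝ) + 11) * ((a : ℝ) + 12)) := by
    intro a
    have ha : (0:ℝ) ≤ (a : ℝ) := Nat.cast_nonneg a
    simp only [hu, Nat.cast_add, Nat.cast_one]
    field_simp
    ring
  have h0 : Tendsto u atTop (nhds 0) := by
    apply squeeze_zero (g := fun a : ℕ => 1 / ((a : ℝ) + 1))
    · intro a; have ha : (0:ℝ) ≤ (a : ℝ) := Nat.cast_nonneg a; positivity
    · intro a
      have ha : (0:ℝ) ≤ (a : ℝ) := Nat.cast_nonneg a
      apply one_div_le_one_div_of_le (by positivity)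
      nlinarith [sq_nonneg ((a:ℝ))]
    · exact tendsto_one_div_add_atTop_nhds_zero_nat
  have hnn : ∀ a : ℕ, 0 ≤ u a - u (a + 1) := by
    intro a
    rw [hdiff a]
    have ha : (0:ℝ) ≤ (a : ℝ) := Nat.cast_nonneg a
    positivity
  have := telescope_hasSum u h0 hnn
  rw [show u 0 = 1 / 660 by norm_num [hu]] at this
  simpa only [hdiff] using this

/-- the series under study -/
private noncomputable def F : ℕ × ℕ → ℝ := fun p =>
  1 / (2 * ((p.1 : ℝ) + 1) + 2 * ((p.2 : ℝ) + 1) - 2) ^ 6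
    - 1 / (2 * ((p.1 : ℝ) + 1) + 2 * ((p.2 : ℝ) + 1) - 1) ^ 6

/-- the tail majorant -/
private noncomputable def G : ℕ × ℕ → ℝ := fun p =>
  1 / (64 * ((p.1 : ℝ) + (p.2 : ℝ) + 10) * ((p.1 : ℝ) + (p.2 : ℝ) + 11)
    * ((p.1 : ℝ) + (p.2 : ℝ) + 12) * ((p.1 : ℝ) + (p.2 : ℝ) + 13))

private lemma F_eq (p : ℕ × ℕ) :
    F p = 1 / (2 * ((p.1 : ℝ) + (p.2 : ℝ)) + 2) ^ 6 - 1 / (2 * ((p.1 : ℝ) + (p.2 : ℝ)) + 3) ^ 6 := by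
  simp only [F]
  ring_nf

private lemma F_pos (p : ℕ × ℕ) : 0 < F p := by
  rw [F_eq]
  have hx : (0:ℝ) ≤ (p.1 : ℝ) := Nat.cast_nonneg _
  have hy : (0:ℝ) ≤ (p.2 : ℝ) := Nat.cast_nonneg _
  set s : ℝ := (p.1 : ℝ) + (p.2 : ℝ) with hs
  have h1 : (0:ℝ) < 2 * s + 2 := by positivity
  have h2 : 2 * s + 2 < 2 * s + 3 := by linarith
  have := pow_lt_pow_left₀ h2 h1.le (by norm_num : 6 ≠ 0)
  have h3 : (0:ℝ) < (2 * s + 2) ^ 6 := by positivity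
  have h4 : (0:ℝ) < (2 * s + 3) ^ 6 := by positivity
  have := one_div_lt_one_div_of_lt h3 this
  linarith

private lemma G_nonneg (p : ℕ × ℕ) : 0 ≤ G p := by
  have hx : (0:ℝ) ≤ (p.1 : ℝ) := Nat.cast_nonneg _
  have hy : (0:ℝ) ≤ (p.2 : ℝ) := Nat.cast_nonneg _
  simp only [G]
  positivity

private lemma F_le_M (p : ℕ × ℕ) :
    F p ≤ (1 / ((p.1 : ℝ) + 1) ^ 2) * (1 / ((p.2 : ℝ) + 1) ^ 2) := by
  rw [F_eq]
  have hx : (0:ℝ) ≤ (p.1 : ℝ) := Nat.cast_nonneg _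
  have hy : (0:ℝ) ≤ (p.2 : ℝ) := Nat.cast_nonneg _
  set x : ℝ := (p.1 : ℝ)
  set y : ℝ := (p.2 : ℝ)
  have h3 : (0:ℝ) < (2 * (x + y) + 3) ^ 6 := by positivity
  have hle : 1 / (2 * (x + y) + 2) ^ 6 ≤ (1 / (x + 1) ^ 2) * (1 / (y + 1) ^ 2) := by
    rw [one_div_mul_one_div]
    apply one_div_le_one_div_of_le (by positivity)
    -- (x+1)^2 * (y+1)^2 ≤ (2(x+y)+2)^6 = 64 (x+y+1)^6
    have h1 : (x + 1) * (y + 1) ≤ (x + y + 1) ^ 2 := by nlinarith [mul_nonneg hx hy, sq_nonneg x, sq_nonneg y]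
    have h2 : (x + 1) ^ 2 * (y + 1) ^ 2 ≤ (x + y + 1) ^ 4 := by nlinarith [mul_le_mul h1 h1 (by positivity) (by positivity)]
    have h4 : (1:ℝ) ≤ x + y + 1 := by linarith
    have h5 : (x + y + 1) ^ 4 ≤ (x + y + 1) ^ 6 := pow_le_pow_right₀ h4 (by norm_num)
    nlinarith [pow_nonneg (by linarith : (0:ℝ) ≤ x + y + 1) 6]
  have hpos : 0 < 1 / (2 * (x + y) + 3) ^ 6 := by positivity
  linarith

private lemma G_le_M (p : ℕ × ℕ) :
    G p ≤ (1 / ((p.1 : ℝ) + 1) ^ 2) * (1 / ((p.2 : ℝ) + 1) ^ 2) := by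
  have hx : (0:ℝ) ≤ (p.1 : ℝ) := Nat.cast_nonneg _
  have hy : (0:ℝ) ≤ (p.2 : ℝ) := Nat.cast_nonneg _
  simp only [G]
  set x : ℝ := (p.1 : ℝ)
  set y : ℝ := (p.2 : ℝ)
  rw [one_div_mul_one_div]
  apply one_div_le_one_div_of_le (by positivity)
  have h1 : (x + 1) * (y + 1) ≤ (x + y + 10) * (x + y + 11) :=
    mul_le_mul (by linarith) (by linarith) (by linarith) (by linarith)
  have h2 : (x + 1) * (y + 1) ≤ (x + y + 12) * (x + y + 13) :=
    mul_le_mul (by linarith) (by linarith) (by linarith) (by linarith)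
  have h3 : ((x + 1) * (y + 1)) * ((x + 1) * (y + 1))
      ≤ ((x + y + 10) * (x + y + 11)) * ((x + y + 12) * (x + y + 13)) :=
    mul_le_mul h1 h2 (by positivity) (by positivity)
  nlinarith [h3, mul_nonneg (mul_nonneg (by linarith : (0:ℝ) ≤ x+y+10) (by linarith : (0:ℝ) ≤ x+y+11)) (mul_nonneg (by linarith : (0:ℝ) ≤ x+y+12) (by linarith : (0:ℝ) ≤ x+y+13))]

private lemma Msummable :
    Summable (fun p : ℕ × ℕ => (1 / ((p.1 : ℝ) + 1) ^ 2) * (1 / ((p.2 : ℝ) + 1) ^ 2)) := by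
  exact Summable.mul_of_nonneg (f := fun n : ℕ => 1 / ((n : ℝ) + 1) ^ 2)
    (g := fun n : ℕ => 1 / ((n : ℝ) + 1) ^ 2) Psummable Psummable
    (fun n => by positivity) (fun n => by positivity)

private lemma Fsummable : Summable F :=
  Summable.of_nonneg_of_le (fun p => (F_pos p).le) F_le_M Msummable

private lemma Gsummable : Summable G :=
  Summable.of_nonneg_of_le G_nonneg G_le_M Msummable

private lemma Ginner (a : ℕ) :
    HasSum (fun b : ℕ => G (a, b))
      ((1 / 64) * (1 / (3 * ((a : ℝ) + 10) * ((a : ℝ) + 11) * ((a : ℝ) + 12)))) := by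
  have ha0 : (0:ℝ) ≤ (a : ℝ) := Nat.cast_nonneg a
  have hm : (1:ℝ) ≤ (a : ℝ) + 10 := by linarith
  have := (hasSum_inner ((a : ℝ) + 10) hm).mul_left (1 / 64)
  have ha : (0:ℝ) ≤ (a : ℝ) := Nat.cast_nonneg a
  convert this using 2 with b
  · rfl
  · simp only [G]
    rw [one_div_mul_one_div]
    ring_nf
  · ring

private lemma Gtsum : ∑' p : ℕ × ℕ, G p = 1 / 42240 := by
  rw [Gsummable.tsum_prod' (fun a => (Ginner a).summable)]
  have h1 : ∀ a : ℕ, ∑' b : ℕ, G (a, b)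
      = (1 / 64) * (1 / (3 * ((a : ℝ) + 10) * ((a : ℝ) + 11) * ((a : ℝ) + 12))) :=
    fun a => (Ginner a).tsum_eq
  rw [tsum_congr h1]
  have := (hasSum_outer.mul_left (1 / 64)).tsum_eq
  rw [this]
  norm_num

private lemma F_le_G (p : ℕ × ℕ) (hp : 6 ≤ p.1 + p.2) : F p ≤ G p := by
  rw [F_eq]
  have hx : (0:ℝ) ≤ (p.1 : ℝ) := Nat.cast_nonneg _
  have hy : (0:ℝ) ≤ (p.2 : ℝ) := Nat.cast_nonneg _
  have hs : (6:ℝ) ≤ (p.1 : ℝ) + (p.2 : ℝ) := by exact_mod_cast hp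
  simp only [G]
  set s : ℝ := (p.1 : ℝ) + (p.2 : ℝ) with hsdef
  have h3 : (0:ℝ) < (2 * s + 3) ^ 6 := by positivity
  have key : 1 / (2 * s + 2) ^ 6
      ≤ 1 / (64 * (s + 10) * (s + 11) * (s + 12) * (s + 13)) := by
    apply one_div_le_one_div_of_le (by positivity)
    -- 64 (s+10)(s+11)(s+12)(s+13) ≤ (2s+2)^6 = 64 (s+1)^6
    have hy7 : (7:ℝ) ≤ s + 1 := by linarith
    set t : ℝ := s + 1 with htdef
    have h2 : (49:ℝ) ≤ t ^ 2 := by nlinarith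
    have h4 : (2401:ℝ) ≤ t ^ 4 := by nlinarith
    have hmain : (t + 9) * (t + 10) * (t + 11) * (t + 12) ≤ t ^ 6 := by
      nlinarith [h2, h4, mul_le_mul h4 h2 (by norm_num) (by positivity), sq_nonneg t, mul_nonneg (mul_nonneg (by positivity : (0:ℝ) ≤ t^2) (by positivity : (0:ℝ) ≤ t^2)) (sq_nonneg (t - 7))]
    have e1 : 64 * (s + 10) * (s + 11) * (s + 12) * (s + 13)
        = 64 * ((t + 9) * (t + 10) * (t + 11) * (t + 12)) := by rw [htdef]; ring
    have e2 : (2 * s + 2) ^ 6 = 64 * t ^ 6 := by rw [htdef]; ring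
    rw [e1, e2]
    linarith
  have hpos : 0 < 1 / (2 * s + 3) ^ 6 := by positivity
  linarith

private def Sfin : Finset (ℕ × ℕ) :=
  (Finset.range 6 ×ˢ Finset.range 6).filter fun p => p.1 + p.2 ≤ 5

private lemma mem_Sfin (p : ℕ × ℕ) : p ∈ Sfin ↔ p.1 + p.2 ≤ 5 := by
  simp only [Sfin, Finset.mem_filter, Finset.mem_product, Finset.mem_range]
  omega

private lemma Sfin_sum_lower : (0.0146 : ℝ) < ∑ p ∈ Sfin, F p := by
  rw [Sfin, Finset.sum_filter, Finset.sum_product]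
  simp only [F, Finset.sum_range_succ, Finset.sum_range_zero]
  norm_num

private lemma Sfin_sum_upper : (∑ p ∈ Sfin, F p) + 1 / 42240 < (0.0147 : ℝ) := by
  rw [Sfin, Finset.sum_filter, Finset.sum_product]
  simp only [F, Finset.sum_range_succ, Finset.sum_range_zero]
  norm_num

/-- The double series `Σ_{r,s≥1} [1/(2r + 2s − 2)⁶ − 1/(2r + 2s − 1)⁶]` converges
(each bracketed term being positive) and its value lies strictly between
`0.0146` and `0.0147` (it is `0.0146637…`). -/
theorem domain_wall_energy_difference :
    (∀ p : ℕ × ℕ,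
      0 < 1 / (2 * ((p.1 : ℝ) + 1) + 2 * ((p.2 : ℝ) + 1) - 2) ^ 6
        - 1 / (2 * ((p.1 : ℝ) + 1) + 2 * ((p.2 : ℝ) + 1) - 1) ^ 6) ∧
    Summable (fun p : ℕ × ℕ =>
      1 / (2 * ((p.1 : ℝ) + 1) + 2 * ((p.2 : ℝ) + 1) - 2) ^ 6
        - 1 / (2 * ((p.1 : ℝ) + 1) + 2 * ((p.2 : ℝ) + 1) - 1) ^ 6) ∧
    0.0146 < ∑' p : ℕ × ℕ,
        (1 / (2 * ((p.1 : ℝ) + 1) + 2 * ((p.2 : ℝ) + 1) - 2) ^ 6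
          - 1 / (2 * ((p.1 : ℝ) + 1) + 2 * ((p.2 : ℝ) + 1) - 1) ^ 6) ∧
    (∑' p : ℕ × ℕ,
        (1 / (2 * ((p.1 : ℝ) + 1) + 2 * ((p.2 : ℝ) + 1) - 2) ^ 6
          - 1 / (2 * ((p.1 : ℝ) + 1) + 2 * ((p.2 : ℝ) + 1) - 1) ^ 6)) < 0.0147 := by
  have key := Fsummable.sum_add_tsum_compl (s := Sfin)
  have htail_nonneg : 0 ≤ ∑' p : ↑((Sfin : Set (ℕ × ℕ))ᶜ), F p :=
    tsum_nonneg fun p => (F_pos p).le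
  have htail_le : (∑' p : ↑((Sfin : Set (ℕ × ℕ))ᶜ), F p) ≤ ∑' p : ℕ × ℕ, G p := by
    refine Summable.tsum_le_tsum_of_inj (Subtype.val) Subtype.val_injective
      (fun c _ => G_nonneg c) (fun i => ?_) (Fsummable.subtype _) Gsummable
    apply F_le_G
    have := i.2
    simp only [Set.mem_compl_iff, Finset.mem_coe, mem_Sfin] at this
    omega
  have hlow : (0.0146 : ℝ) < ∑' p : ℕ × ℕ, F p := by
    rw [← key]
    have := Sfin_sum_lower
    linarith
  have hhigh : (∑' p : ℕ × ℕ, F p) < 0.0147 := by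
    rw [← key]
    have := Sfin_sum_upper
    rw [Gtsum] at htail_le
    linarith
  exact ⟨F_pos, Fsummable, hlow, hhigh⟩
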